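/- arXiv:1204.1090 — 6 statements merged into one kernel-verified Lean document; each statement's English description precedes it below -/
import Mathlib

section
/- Let X be a real Banach space. The monotone map T(x, x*) = (-x*, J(x)) from X × X* to X* × X** is maximal monotone: if (p, q) ∈ (X × X*) × (X* × X**) satisfies ⟨p - z, q - T(z)⟩ ≥ 0 for all z ∈ X × X*, then q = T(p). -/
open NormedSpace

/-- `T(x, x*) = (-x*, J x)` is maximal monotone: any `(p, q)` monotonically related to the
graph of `T` lies in the graph of `T`. -/
theorem stmt2 (X : Type*) [NormedAddCommGroup X] [NormedSpace ℝ X] [CompleteSpace X]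
    (p : X × StrongDual ℝ X) (q : StrongDual ℝ X × StrongDual ℝ (StrongDual ℝ X))
    (h : ∀ z : X × StrongDual ℝ X,
      0 ≤ (q.1 - -z.2) (p.1 - z.1) +
          (q.2 - inclusionInDoubleDual ℝ X z.1) (p.2 - z.2)) :
    q = (-p.2, inclusionInDoubleDual ℝ X p.1) := by
  have key : ∀ (u : X) (v : StrongDual ℝ X) (s t : ℝ),
      0 ≤ -(s * ((q.1 + p.2) u)) - t * ((q.2 - inclusionInDoubleDual ℝ X p.1) v) := by
    intro u v s t
    have := h (p.1 + s • u, p.2 + t • v)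
    simp only [map_add, map_sub, map_neg, map_smul, ContinuousLinearMap.add_apply,
      ContinuousLinearMap.sub_apply, ContinuousLinearMap.neg_apply,
      ContinuousLinearMap.smul_apply, smul_eq_mul, dual_def] at this ⊢
    nlinarith [this]
  have hA : ∀ u : X, (q.1 + p.2) u = 0 := by
    intro u
    have h1 := key u 0 1 0
    have h2 := key u 0 (-1) 0
    simp only [ContinuousLinearMap.add_apply] at *
    simp at h1 h2
    linarith
  have hB : ∀ v : StrongDual ℝ X, (q.2 - inclusionInDoubleDual ℝ X p.1) v = 0 := by
    intro v
    have h1 := key 0 v 0 1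
    have h2 := key 0 v 0 (-1)
    simp only [ContinuousLinearMap.sub_apply, dual_def] at *
    simp at h1 h2
    linarith
  have e1 : q.1 = -p.2 := by
    have : q.1 + p.2 = 0 := by ext u; simpa using hA u
    linear_combination (norm := abel) this
  have e2 : q.2 = inclusionInDoubleDual ℝ X p.1 := by
    have : q.2 - inclusionInDoubleDual ℝ X p.1 = 0 := by ext v; simpa using hB v
    exact sub_eq_zero.mp this
  exact Prod.ext e1 e2
end

section
/- Let X be a real Banach space and T(x, x*) = (-x*, J(x)) : X × X* → X* × X**. Suppose a bounded net ((x_i, x_i*), T(x_i, x_i*)) in the graph of T converges in the weak-* × strong topology of (X** × X***) × (X* × X**) to ((p**, p***), (q*, q**)). Then there exist x ∈ X, x* ∈ X* with p** = J(x), p*** = J*(x*) (canonical injections), q* = -x*, and q** = J(x). In other words, the closure of the graph of T under bounded weak-*×strong limits equals the graph of T itself. -/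
open NormedSpace Filter Topology

/-- Bounded nets in the graph of `T(x,x*) = (-x*, Jx)` converging weak-*×strong have their
limit in the (canonically embedded) graph of `T`: the bounded weak-*×strong closure of the
graph of `T` equals the graph of `T` itself. -/
theorem stmt4 (X : Type*) [NormedAddCommGroup X] [NormedSpace ℝ X] [CompleteSpace X]
    (I : Type*) [Nonempty I] [SemilatticeSup I] (a : I → X × StrongDual ℝ X)
    (hbdd : ∃ C : ℝ, ∀ i, ‖a i‖ ≤ C)
    (p'' : StrongDual ℝ (StrongDual ℝ X)) (p''' : StrongDual ℝ (StrongDual ℝ (StrongDual ℝ X)))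
    (q' : StrongDual ℝ X) (q'' : StrongDual ℝ (StrongDual ℝ X))
    -- first component converges in the weak-* topology of `X** × X***`
    (hw1 : ∀ f : StrongDual ℝ X,
      Tendsto (fun i => inclusionInDoubleDual ℝ X (a i).1 f) atTop (𝓝 (p'' f)))
    (hw2 : ∀ g : StrongDual ℝ (StrongDual ℝ X),
      Tendsto (fun i => inclusionInDoubleDual ℝ (StrongDual ℝ X) (a i).2 g) atTop (𝓝 (p''' g)))
    -- second component converges strongly in `X* × X**`
    (hs : Tendsto (fun i => ((-(a i).2, inclusionInDoubleDual ℝ X (a i).1) :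
        StrongDual ℝ X × StrongDual ℝ (StrongDual ℝ X))) atTop (𝓝 (q', q''))) :
    ∃ (x : X) (x' : StrongDual ℝ X),
      p'' = inclusionInDoubleDual ℝ X x ∧
      p''' = inclusionInDoubleDual ℝ (StrongDual ℝ X) x' ∧
      q' = -x' ∧ q'' = inclusionInDoubleDual ℝ X x := by
  -- strong convergences of the two components
  have h1 : Tendsto (fun i => -(a i).2) atTop (𝓝 q') :=
    (continuous_fst.tendsto _).comp hs
  have h2 : Tendsto (fun i => inclusionInDoubleDual ℝ X (a i).1) atTop (𝓝 q'') :=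
    (continuous_snd.tendsto _).comp hs
  -- `(a i).2 → -q'` strongly
  have h1' : Tendsto (fun i => (a i).2) atTop (𝓝 (-q')) := by
    have := h1.neg
    simpa using this
  -- `(a i).1` is Cauchy since its image under the isometric embedding converges
  have hiso : Isometry (inclusionInDoubleDual ℝ X) :=
    (inclusionInDoubleDualLi ℝ (E := X)).isometry
  have hc : CauchySeq (fun i => (a i).1) := by
    have : CauchySeq (fun i => inclusionInDoubleDual ℝ X (a i).1) := h2.cauchySeq
    exact hiso.isUniformInducing.cauchy_map_iff.mp this
  obtain ⟨x, hx⟩ := cauchySeq_tendsto_of_complete hc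
  have hJx : Tendsto (fun i => inclusionInDoubleDual ℝ X (a i).1) atTop
      (𝓝 (inclusionInDoubleDual ℝ X x)) :=
    ((inclusionInDoubleDual ℝ X).continuous.tendsto _).comp hx
  have hq'' : q'' = inclusionInDoubleDual ℝ X x := tendsto_nhds_unique h2 hJx
  refine ⟨x, -q', ?_, ?_, by simp, hq''⟩
  · -- p'' = J x, pointwise
    ext f
    have hpt : Tendsto (fun i => inclusionInDoubleDual ℝ X (a i).1 f) atTop
        (𝓝 (inclusionInDoubleDual ℝ X x f)) := by
      have : Continuous fun g : StrongDual ℝ (StrongDual ℝ X) => g f :=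
        (ContinuousLinearMap.apply ℝ ℝ f).continuous
      exact (this.tendsto _).comp hJx
    exact tendsto_nhds_unique (hw1 f) hpt
  · -- p''' = J (-q'), pointwise
    ext g
    have hJ2 : Tendsto (fun i => inclusionInDoubleDual ℝ (StrongDual ℝ X) (a i).2) atTop
        (𝓝 (inclusionInDoubleDual ℝ (StrongDual ℝ X) (-q'))) :=
      ((inclusionInDoubleDual ℝ (StrongDual ℝ X)).continuous.tendsto _).comp h1'
    have hpt : Tendsto (fun i => inclusionInDoubleDual ℝ (StrongDual ℝ X) (a i).2 g) atTop
        (𝓝 (inclusionInDoubleDual ℝ (StrongDual ℝ X) (-q') g)) := by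
      exact ((ContinuousLinearMap.apply ℝ ℝ g).continuous.tendsto _).comp hJ2
    exact tendsto_nhds_unique (hw2 g) hpt
end

section
/- Let X be a non-reflexive real Banach space, and let x₀** ∈ X**, w₀ ∈ X*** satisfy ⟨x₀**, w₀⟩ = 1 and ⟨J(x), w₀⟩ = 0 for all x ∈ X. For t > 0 define p_t = (t·x₀**, (1/t)·w₀) ∈ X** × X*** and q_t = (0, t·x₀**) ∈ X* × X**. Then for every (x, x*) ∈ X × X*, the pairing ⟨(J(x), J*(x*)) - p_t, (-x*, J(x)) - q_t⟩ equals 1; in particular it is nonnegative, so the extension of the graph of T(x,x*) = (-x*, J(x)) (canonically embedded in (X** × X***) × (X* × X**)) by the single point (p_t, q_t) is monotone. -/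
namespace NormedSpace

/-- The topological dual of a seminormed space `E` (as in the older Mathlib). -/
abbrev Dual (𝕜 : Type*) [NontriviallyNormedField 𝕜] (E : Type*) [SeminormedAddCommGroup E]
    [NormedSpace 𝕜 E] : Type _ := E →L[𝕜] 𝕜

end NormedSpace

open NormedSpace

theorem stmt7_key (X : Type*) [NormedAddCommGroup X] [NormedSpace ℝ X]
    (x₀ : Dual ℝ (Dual ℝ X)) (w₀ : Dual ℝ (Dual ℝ (Dual ℝ X)))
    (h1 : w₀ x₀ = 1) (h0 : ∀ x : X, w₀ (inclusionInDoubleDual ℝ X x) = 0)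
    (t : ℝ) (ht : t ≠ 0) (x : X) (x' : Dual ℝ X) :
      (inclusionInDoubleDual ℝ X x - t • x₀) (-x' - 0) +
      (inclusionInDoubleDual ℝ (Dual ℝ X) x' - (1/t) • w₀)
        (inclusionInDoubleDual ℝ X x - t • x₀) = 1 := by
  simp [dual_def, map_sub, map_smul, map_neg, h1, h0, smul_eq_mul]
  field_simp
  ring

/-- With `⟨x₀**, w₀⟩ = 1`, `w₀` vanishing on `J(X)`, `p_t = (t x₀**, (1/t) w₀)`,
`q_t = (0, t x₀**)`: the pairing `⟨(Jx, J*x*) - p_t, (-x*, Jx) - q_t⟩` equals `1` for all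
`(x, x*)`, hence the graph of `T` extended by `(p_t, q_t)` is monotone. -/
theorem stmt7 (X : Type*) [NormedAddCommGroup X] [NormedSpace ℝ X] [CompleteSpace X]
    (x₀ : Dual ℝ (Dual ℝ X)) (w₀ : Dual ℝ (Dual ℝ (Dual ℝ X)))
    (h1 : w₀ x₀ = 1) (h0 : ∀ x : X, w₀ (inclusionInDoubleDual ℝ X x) = 0)
    (t : ℝ) (ht : 0 < t) :
    (∀ (x : X) (x' : Dual ℝ X),
      (inclusionInDoubleDual ℝ X x - t • x₀) (-x' - 0) +
      (inclusionInDoubleDual ℝ (Dual ℝ X) x' - (1/t) • w₀)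
        (inclusionInDoubleDual ℝ X x - t • x₀) = 1) ∧
    -- the extended graph is monotone
    (∀ p q : (Dual ℝ (Dual ℝ X) × Dual ℝ (Dual ℝ (Dual ℝ X))) ×
        (Dual ℝ X × Dual ℝ (Dual ℝ X)),
      p ∈ {z | (∃ (x : X) (x' : Dual ℝ X),
              z = ((inclusionInDoubleDual ℝ X x, inclusionInDoubleDual ℝ (Dual ℝ X) x'),
                   (-x', inclusionInDoubleDual ℝ X x))) ∨
            z = ((t • x₀, (1/t) • w₀), (0, t • x₀))} →
      q ∈ {z | (∃ (x : X) (x' : Dual ℝ X),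
              z = ((inclusionInDoubleDual ℝ X x, inclusionInDoubleDual ℝ (Dual ℝ X) x'),
                   (-x', inclusionInDoubleDual ℝ X x))) ∨
            z = ((t • x₀, (1/t) • w₀), (0, t • x₀))} →
      0 ≤ (p.1.1 - q.1.1) (p.2.1 - q.2.1) + (p.1.2 - q.1.2) (p.2.2 - q.2.2)) := by
  have ht' : t ≠ 0 := ne_of_gt ht
  refine ⟨fun x x' => stmt7_key X x₀ w₀ h1 h0 t ht' x x', ?_⟩
  rintro p q (⟨x, x', rfl⟩ | rfl) (⟨y, y', rfl⟩ | rfl)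
  · -- both on graph: sum = 0
    simp only
    have : (inclusionInDoubleDual ℝ X x - inclusionInDoubleDual ℝ X y) (-x' - -y') +
        (inclusionInDoubleDual ℝ (Dual ℝ X) x' - inclusionInDoubleDual ℝ (Dual ℝ X) y')
          (inclusionInDoubleDual ℝ X x - inclusionInDoubleDual ℝ X y) = 0 := by
      simp [dual_def, map_sub, map_neg]
      ring
    linarith [this]
  · -- p on graph, q special: equals 1
    simp only
    have := stmt7_key X x₀ w₀ h1 h0 t ht' x x'
    linarith [this]
  · -- p special, q on graph: pairing of negatives, equals 1
    simp only
    have key := stmt7_key X x₀ w₀ h1 h0 t ht' y y'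
    have e1 : (t • x₀ - inclusionInDoubleDual ℝ X y) (0 - -y') =
        (inclusionInDoubleDual ℝ X y - t • x₀) (-y' - 0) := by
      simp [map_sub, map_neg]
    have e2 : ((1/t) • w₀ - inclusionInDoubleDual ℝ (Dual ℝ X) y')
          (t • x₀ - inclusionInDoubleDual ℝ X y) =
        (inclusionInDoubleDual ℝ (Dual ℝ X) y' - (1/t) • w₀)
          (inclusionInDoubleDual ℝ X y - t • x₀) := by
      simp [map_sub]; ring
    rw [e1, e2]
    linarith [key]
  · simp
end

section
/- Let X be a non-reflexive real Banach space. The maximal monotone operator T : X × X* → X* × X**, T(x, x*) = (-x*, J(x)), is not of type (D): there exists a point (p, q) ∈ (X** × X***) × (X* × X**) satisfying ⟨q - T(z), p - z⟩ ≥ 0 for all z ∈ X × X* (where X × X* is canonically embedded in X** × X***), but which is not in the graph of the bounded weak-*×strong closure of T (which equals the graph of T itself). -/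
open NormedSpace

/-- If `X` is non-reflexive then `T(x,x*) = (-x*, Jx)` is not of type (D): there is a point
monotonically related to the (embedded) graph of `T` which does not belong to the graph of the
bounded weak-*×strong closure of `T` (which equals the graph of `T` itself). -/
theorem stmt9 (X : Type*) [NormedAddCommGroup X] [NormedSpace ℝ X] [CompleteSpace X]
    (hnr : ¬ Function.Surjective (inclusionInDoubleDual ℝ X)) :
    ∃ (p : Dual ℝ (Dual ℝ X) × Dual ℝ (Dual ℝ (Dual ℝ X)))
      (q : Dual ℝ X × Dual ℝ (Dual ℝ X)),
      (∀ (x : X) (x' : Dual ℝ X),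
        0 ≤ (p.1 - inclusionInDoubleDual ℝ X x) (q.1 - -x') +
            (p.2 - inclusionInDoubleDual ℝ (Dual ℝ X) x')
              (q.2 - inclusionInDoubleDual ℝ X x)) ∧
      ¬ ∃ (x : X) (x' : Dual ℝ X),
        p = (inclusionInDoubleDual ℝ X x, inclusionInDoubleDual ℝ (Dual ℝ X) x') ∧
        q = (-x', inclusionInDoubleDual ℝ X x) := by
  rw [Function.Surjective] at hnr
  push_neg at hnr
  obtain ⟨v, hv⟩ := hnr
  refine ⟨(v, 0), (0, v), ?_, ?_⟩
  · intro x x'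
    have h1 : (v - inclusionInDoubleDual ℝ X x) ((0 : Dual ℝ X) - -x') =
        (v - inclusionInDoubleDual ℝ X x) x' := by
      congr 1; simp
    have h2 : ((0 : Dual ℝ (Dual ℝ (Dual ℝ X))) - inclusionInDoubleDual ℝ (Dual ℝ X) x')
        (v - inclusionInDoubleDual ℝ X x) = -((v - inclusionInDoubleDual ℝ X x) x') := by
      simp [inclusionInDoubleDual]
    simp only [h1, h2]
    simp
  · rintro ⟨x, x', hp, -⟩
    exact hv x (congrArg Prod.fst hp).symm
end

section
/- Let X be a non-reflexive real Banach space and T(x, x*) = (-x*, J(x)). Then the family of monotone subsets of (X** × X***) × (X* × X**) containing the (canonically embedded) graph of T has infinitely many distinct maximal elements. More precisely, for each t > 0 there is a maximal monotone operator B_t : X** × X*** ⇉ X* × X** whose graph contains graph(T) ∪ {(p_t, q_t)}, and B_t ≠ B_s whenever t ≠ s. -/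
open NormedSpace

/-- For each `t > 0` there is a maximal monotone subset `B t` of
`(X** × X***) × (X* × X**)` containing the embedded graph of `T` together with `(p_t, q_t)`,
and `B t ≠ B s` for `t ≠ s`; in particular the family of monotone sets containing the graph
of `T` has infinitely many distinct maximal elements. -/
theorem stmt10 (X : Type*) [NormedAddCommGroup X] [NormedSpace ℝ X] [CompleteSpace X]
    (x₀ : Dual ℝ (Dual ℝ X)) (w₀ : Dual ℝ (Dual ℝ (Dual ℝ X)))
    (hx₀ : x₀ ∉ Set.range (inclusionInDoubleDual ℝ X))
    (h1 : w₀ x₀ = 1) (h0 : ∀ x : X, w₀ (inclusionInDoubleDual ℝ X x) = 0) :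
    ∃ B : ℝ → Set ((Dual ℝ (Dual ℝ X) × Dual ℝ (Dual ℝ (Dual ℝ X))) ×
        (Dual ℝ X × Dual ℝ (Dual ℝ X))),
      (∀ t : ℝ, 0 < t →
        -- `B t` is monotone
        (∀ p q, p ∈ B t → q ∈ B t →
          0 ≤ (p.1.1 - q.1.1) (p.2.1 - q.2.1) + (p.1.2 - q.1.2) (p.2.2 - q.2.2)) ∧
        -- `B t` is maximal monotone
        (∀ M, (∀ p q, p ∈ M → q ∈ M →
            0 ≤ (p.1.1 - q.1.1) (p.2.1 - q.2.1) + (p.1.2 - q.1.2) (p.2.2 - q.2.2)) →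
          B t ⊆ M → M = B t) ∧
        -- `B t` contains the embedded graph of `T`
        (∀ (x : X) (x' : Dual ℝ X),
          ((inclusionInDoubleDual ℝ X x, inclusionInDoubleDual ℝ (Dual ℝ X) x'),
            (-x', inclusionInDoubleDual ℝ X x)) ∈ B t) ∧
        -- `B t` contains `(p_t, q_t)`
        ((t • x₀, (1/t) • w₀), ((0 : Dual ℝ X), t • x₀)) ∈ B t) ∧
      ∀ s t : ℝ, 0 < s → 0 < t → s ≠ t → B s ≠ B t := by
  classical
  set E := (Dual ℝ (Dual ℝ X) × Dual ℝ (Dual ℝ (Dual ℝ X))) × (Dual ℝ X × Dual ℝ (Dual ℝ X))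
    with hE
  set J : X → Dual ℝ (Dual ℝ X) := fun x => inclusionInDoubleDual ℝ X x with hJ
  set J' : Dual ℝ X → Dual ℝ (Dual ℝ (Dual ℝ X)) :=
    fun x' => inclusionInDoubleDual ℝ (Dual ℝ X) x' with hJ'
  set φ : E → E → ℝ := fun p q =>
    (p.1.1 - q.1.1) (p.2.1 - q.2.1) + (p.1.2 - q.1.2) (p.2.2 - q.2.2) with hφ
  have φsymm : ∀ p q : E, φ p q = φ q p := by
    intro p q
    simp only [hφ]
    rw [← neg_sub q.1.1 p.1.1, ← neg_sub q.1.2 p.1.2, ← neg_sub q.2.1 p.2.1,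
      ← neg_sub q.2.2 p.2.2]
    simp only [ContinuousLinearMap.neg_apply, map_neg, map_sub, neg_sub, neg_neg,
      ContinuousLinearMap.sub_apply]
    ring
  set Mon : Set E → Prop := fun M => ∀ p q, p ∈ M → q ∈ M → 0 ≤ φ p q with hMon
  set A : ℝ → Set E := fun t =>
    {p | (∃ x x', p = ((J x, J' x'), (-x', J x))) ∨
      p = ((t • x₀, (1/t) • w₀), ((0 : Dual ℝ X), t • x₀))} with hA
  -- key pairing computations
  have φgg : ∀ (x y : X) (x' y' : Dual ℝ X),
      φ ((J x, J' x'), (-x', J x)) ((J y, J' y'), (-y', J y)) = 0 := by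
    intro x y x' y'
    simp only [hφ, hJ, hJ']
    simp only [ContinuousLinearMap.sub_apply, ContinuousLinearMap.neg_apply, dual_def,
      map_sub]
    ring
  have φgp : ∀ (t : ℝ), 0 < t → ∀ (x : X) (x' : Dual ℝ X),
      φ ((J x, J' x'), (-x', J x)) ((t • x₀, (1/t) • w₀), ((0 : Dual ℝ X), t • x₀)) = 1 := by
    intro t ht x x'
    simp only [hφ, hJ, hJ']
    simp only [ContinuousLinearMap.sub_apply, ContinuousLinearMap.neg_apply,
      ContinuousLinearMap.smul_apply, ContinuousLinearMap.zero_apply, dual_def,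
      map_sub, map_smul, smul_eq_mul, h1, h0]
    field_simp
    simp only [map_neg, map_zero]
    ring
  have φpp : ∀ (s t : ℝ),
      φ ((s • x₀, (1/s) • w₀), ((0 : Dual ℝ X), s • x₀))
        ((t • x₀, (1/t) • w₀), ((0 : Dual ℝ X), t • x₀)) = (1/s - 1/t) * (s - t) := by
    intro s t
    simp only [hφ]
    simp only [ContinuousLinearMap.sub_apply, ContinuousLinearMap.smul_apply,
      ContinuousLinearMap.zero_apply, map_sub, map_smul, smul_eq_mul, h1]
    simp
    ring
  have monA : ∀ t : ℝ, 0 < t → Mon (A t) := by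
    intro t ht p q hp hq
    rcases hp with ⟨x, x', rfl⟩ | rfl <;> rcases hq with ⟨y, y', rfl⟩ | rfl
    · rw [φgg]
    · rw [φgp t ht]; norm_num
    · rw [φsymm, φgp t ht]; norm_num
    · rw [φpp]; simp
  -- Zorn
  have zorn : ∀ t : ℝ, 0 < t → ∃ m, A t ⊆ m ∧ Maximal (· ∈ {M | Mon M ∧ A t ⊆ M}) m := by
    intro t ht
    apply zorn_subset_nonempty
    · intro c hcS hc hne
      refine ⟨⋃₀ c, ⟨?_, ?_⟩, fun s hs => Set.subset_sUnion_of_mem hs⟩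
      · intro p q hp hq
        rcases hp with ⟨a, ha, hpa⟩
        rcases hq with ⟨b, hb, hqb⟩
        rcases hc.total ha hb with h | h
        · exact (hcS hb).1 p q (h hpa) hqb
        · exact (hcS ha).1 p q hpa (h hqb)
      · obtain ⟨a, ha⟩ := hne
        exact (hcS ha).2.trans (Set.subset_sUnion_of_mem ha)
    · exact ⟨monA t ht, subset_rfl⟩
  set B : ℝ → Set E := fun t =>
    if ht : 0 < t then Classical.choose (zorn t ht) else ∅ with hB
  have hB' : ∀ t (ht : 0 < t),
      A t ⊆ B t ∧ Maximal (· ∈ {M | Mon M ∧ A t ⊆ M}) (B t) := by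
    intro t ht
    rw [hB]; simp only [dif_pos ht]
    exact Classical.choose_spec (zorn t ht)
  refine ⟨B, fun t ht => ⟨?_, ?_, ?_, ?_⟩, ?_⟩
  · exact (hB' t ht).2.1.1
  · intro M hM hsub
    have hMmem : M ∈ {M | Mon M ∧ A t ⊆ M} := ⟨hM, ((hB' t ht).1).trans hsub⟩
    exact le_antisymm ((hB' t ht).2.2 hMmem hsub) hsub
  · intro x x'
    exact (hB' t ht).1 (Or.inl ⟨x, x', rfl⟩)
  · exact (hB' t ht).1 (Or.inr rfl)
  · intro s t hs ht hst heq
    have hps : ((s • x₀, (1/s) • w₀), ((0 : Dual ℝ X), s • x₀)) ∈ B t := by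
      rw [← heq]; exact (hB' s hs).1 (Or.inr rfl)
    have hpt : ((t • x₀, (1/t) • w₀), ((0 : Dual ℝ X), t • x₀)) ∈ B t :=
      (hB' t ht).1 (Or.inr rfl)
    have hmono := (hB' t ht).2.1.1 _ _ hps hpt
    rw [φpp s t] at hmono
    have : (1/s - 1/t) * (s - t) = -((s - t)^2) / (s * t) := by
      field_simp; ring
    rw [this] at hmono
    have h3 : s - t ≠ 0 := sub_ne_zero.mpr hst
    have h2 : 0 < (s - t)^2 := lt_of_le_of_ne (sq_nonneg _) (Ne.symm (pow_ne_zero 2 h3))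
    have h4 : -(s - t)^2 / (s * t) < 0 := div_neg_of_neg_of_pos (by linarith) (mul_pos hs ht)
    linarith
end

section
/- Let X be a non-reflexive real Banach space, x₀** ∈ X**, w₀ ∈ X*** with ⟨x₀**, w₀⟩ = 1 and ⟨J(x), w₀⟩ = 0 for all x ∈ X. Then for each t > 0 the point (p_t, q_t) with p_t = (t·x₀**, (1/t)·w₀), q_t = (0, t·x₀**) is monotonically related to the embedded graph of T(x,x*) = (-x*, J(x)), yet (p_t, q_t) does not lie in the embedded graph of T (since t·x₀** ∉ J(X)). -/
open NormedSpace

/-- For each `t > 0`, the point `(p_t, q_t)` is monotonically related to the embedded graph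
of `T(x,x*) = (-x*, Jx)`, yet it does not lie in that graph. -/
theorem stmt17 (X : Type*) [NormedAddCommGroup X] [NormedSpace ℝ X] [CompleteSpace X]
    (x₀ : Dual ℝ (Dual ℝ X)) (w₀ : Dual ℝ (Dual ℝ (Dual ℝ X)))
    (h1 : w₀ x₀ = 1) (h0 : ∀ x : X, w₀ (inclusionInDoubleDual ℝ X x) = 0)
    (t : ℝ) (ht : 0 < t) :
    (∀ (x : X) (x' : Dual ℝ X),
      0 ≤ (t • x₀ - inclusionInDoubleDual ℝ X x) ((0 : Dual ℝ X) - -x') +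
          ((1/t) • w₀ - inclusionInDoubleDual ℝ (Dual ℝ X) x')
            (t • x₀ - inclusionInDoubleDual ℝ X x)) ∧
    ¬ ∃ (x : X) (x' : Dual ℝ X),
      ((t • x₀, (1/t) • w₀) : Dual ℝ (Dual ℝ X) × Dual ℝ (Dual ℝ (Dual ℝ X))) =
        (inclusionInDoubleDual ℝ X x, inclusionInDoubleDual ℝ (Dual ℝ X) x') ∧
      (((0 : Dual ℝ X), t • x₀) : Dual ℝ X × Dual ℝ (Dual ℝ X)) =
        (-x', inclusionInDoubleDual ℝ X x) := by
  constructor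
  · intro x x'
    have key : (t • x₀ - inclusionInDoubleDual ℝ X x) ((0 : Dual ℝ X) - -x') +
        ((1/t) • w₀ - inclusionInDoubleDual ℝ (Dual ℝ X) x')
          (t • x₀ - inclusionInDoubleDual ℝ X x) = 1 := by
      simp [dual_def, h1, h0, mul_sub]
      field_simp
    rw [key]; norm_num
  · rintro ⟨x, x', hpq, _⟩
    have hx : t • x₀ = inclusionInDoubleDual ℝ X x := congrArg Prod.fst hpq
    have := h0 x
    rw [← hx] at this
    simp [h1] at this
    exact ht.ne' this
end
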